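/- Let X be a nonempty finite type and p : ℝ → X → ℝ a parametrized family of probability mass functions (p(θ, x) > 0, ∑_{x∈X} p(θ, x) = 1, and θ ↦ p(θ, x) differentiable for each x). Let f : X → {0,1} and let 1 ≤ k ≤ n. Define pass@k(θ) = ∑_{x : Fin k → X} (∏_{i} p(θ, xᵢ)) · (1 − ∏_{i}(1 − f(xᵢ))). For a tuple x : Fin n → X, let c(x) = #{i : f(xᵢ) = 1} and define r_i(x) = k/n if f(xᵢ) = 1 and r_i(x) = (k/n)·ρ(n−1, c(x), k−1) if f(xᵢ) = 0. Then for every θ: ∑_{x : Fin n → X} (∏_{i} p(θ, xᵢ)) · ∑_{i=1}^{n} r_i(x) · (d/dθ p(θ, xᵢ))/p(θ, xᵢ) = d/dθ pass@k(θ). In other words, the estimator ∑_i r_i(x) ∇_θ log p(xᵢ|θ) is an unbiased estimator of the gradient of pass@k. -/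

import Mathlib

/-- ρ(n, c, k) = 1 − C(n−c, k)/C(n, k), with the convention C(a,b) = 0 for b > a. -/
noncomputable def rho (n c k : ℕ) : ℝ := 1 - ((n - c).choose k : ℝ) / (n.choose k : ℝ)

lemma sum_prod_fn {I X : Type*} [Fintype I] [DecidableEq I] [Fintype X] (w : I → X → ℝ) :
    ∑ z : I → X, ∏ i, w i (z i) = ∏ i, ∑ x, w i x := by
  rw [Finset.prod_univ_sum, Fintype.piFinset_univ]

lemma sum_powersetCard {I X : Type*} [DecidableEq I] (f : X → ℕ)
    (hf : ∀ x, f x = 0 ∨ f x = 1) (s : Finset I) (j : ℕ) (x : I → X) :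
    ∑ S ∈ s.powersetCard j, ∏ t ∈ S, (1 - (f (x t) : ℝ))
      = (((s.filter fun t => f (x t) = 0).card.choose j : ℕ) : ℝ) := by
  have h1 : ∀ S : Finset I, (∏ t ∈ S, (1 - (f (x t) : ℝ)))
      = if ∀ t ∈ S, f (x t) = 0 then 1 else 0 := by
    intro S
    rw [← Finset.prod_boole]
    refine Finset.prod_congr rfl fun t _ => ?_
    rcases hf (x t) with h | h <;> simp [h]
  simp_rw [h1]
  rw [Finset.sum_boole]
  have h2 : (s.powersetCard j).filter (fun S => ∀ t ∈ S, f (x t) = 0)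
      = (s.filter fun t => f (x t) = 0).powersetCard j := by
    ext S
    simp only [Finset.mem_filter, Finset.mem_powersetCard]
    constructor
    · rintro ⟨⟨hs, hc⟩, hall⟩
      exact ⟨Finset.subset_iff.mpr fun t ht => Finset.mem_filter.mpr ⟨hs ht, hall t ht⟩, hc⟩
    · rintro ⟨hs, hc⟩
      exact ⟨⟨Finset.subset_iff.mpr fun t ht => (Finset.mem_filter.mp (hs ht)).1, hc⟩,
        fun t ht => (Finset.mem_filter.mp (hs ht)).2⟩
  rw [h2, Finset.card_powersetCard]

/-- The estimator ∑_i r_i(x) ∇_θ log p(xᵢ|θ), with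
r_i(x) = k/n if f(xᵢ) = 1 and r_i(x) = (k/n)·ρ(n−1, c(x), k−1) if f(xᵢ) = 0,
where c(x) = #{i : f(xᵢ) = 1}, is an unbiased estimator of the gradient of
pass@k(θ) = ∑_{x : Fin k → X} (∏ᵢ p(θ, xᵢ)) · (1 − ∏ᵢ(1 − f(xᵢ))). -/
theorem unbiased_passk_gradient_estimator {X : Type*} [Fintype X] [Nonempty X]
    (p : ℝ → X → ℝ)
    (hpos : ∀ θ x, 0 < p θ x)
    (hsum : ∀ θ, ∑ x, p θ x = 1)
    (hdiff : ∀ x, Differentiable ℝ fun θ => p θ x)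
    (f : X → ℕ) (hf : ∀ x, f x = 0 ∨ f x = 1)
    (n k : ℕ) (hk : 1 ≤ k) (hkn : k ≤ n) (θ : ℝ) :
    ∑ x : Fin n → X, (∏ i, p θ (x i)) *
        ∑ i, (if f (x i) = 1 then (k : ℝ) / (n : ℝ)
              else (k : ℝ) / (n : ℝ) *
                rho (n - 1) ((Finset.univ.filter fun j => f (x j) = 1).card) (k - 1)) *
          (deriv (fun t => p t (x i)) θ / p θ (x i))
      = deriv (fun t => ∑ y : Fin k → X,
          (∏ i, p t (y i)) * (1 - ∏ i, (1 - (f (y i) : ℝ)))) θ := by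
  classical
  have hn1 : 1 ≤ n := le_trans hk hkn
  have hnR : (n : ℝ) ≠ 0 := Nat.cast_ne_zero.mpr (by omega)
  set Q : ℝ := ∑ x, p θ x * (f x : ℝ) with hQdef
  set Q' : ℝ := ∑ x, deriv (fun t => p t x) θ * (f x : ℝ) with hQ'def
  have hCnpos : 0 < (n - 1).choose (k - 1) := Nat.choose_pos (by omega)
  have hCn : (((n - 1).choose (k - 1) : ℕ) : ℝ) ≠ 0 := Nat.cast_ne_zero.mpr hCnpos.ne'
  -- derivative facts
  have hQ : ∀ t : ℝ, HasDerivAt (fun t => ∑ x, p t x * (f x : ℝ))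
      (∑ x, deriv (fun s => p s x) t * (f x : ℝ)) t := by
    intro t
    exact HasDerivAt.fun_sum fun x _ => (((hdiff x) t).hasDerivAt).mul_const _
  have hDsum : ∑ x, deriv (fun t => p t x) θ = 0 := by
    have h1 : HasDerivAt (fun t => ∑ x, p t x) (∑ x, deriv (fun t => p t x) θ) θ :=
      HasDerivAt.fun_sum fun x _ => ((hdiff x) θ).hasDerivAt
    have h2 : (fun t : ℝ => ∑ x, p t x) = fun _ => (1 : ℝ) := funext hsum
    rw [h2] at h1
    simpa using h1.deriv.symm
  have hsum1 : ∀ t : ℝ, ∑ x, p t x * (1 - (f x : ℝ)) = 1 - ∑ x, p t x * (f x : ℝ) := by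
    intro t
    simp_rw [mul_sub, mul_one]
    rw [Finset.sum_sub_distrib, hsum t]
  have hD1 : ∑ x, deriv (fun t => p t x) θ * (1 - (f x : ℝ)) = -Q' := by
    simp_rw [mul_sub, mul_one]
    rw [Finset.sum_sub_distrib, hDsum, hQ'def]
    ring
  -- RHS computation
  have hpass : ∀ t : ℝ, ∑ y : Fin k → X, (∏ i, p t (y i)) * (1 - ∏ i, (1 - (f (y i) : ℝ)))
      = 1 - (1 - ∑ x, p t x * (f x : ℝ)) ^ k := by
    intro t
    have e1 : ∀ y : Fin k → X, (∏ i, p t (y i)) * (1 - ∏ i, (1 - (f (y i) : ℝ)))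
        = (∏ i, p t (y i)) - ∏ i, (p t (y i) * (1 - (f (y i) : ℝ))) := by
      intro y; rw [mul_sub, mul_one, ← Finset.prod_mul_distrib]
    simp_rw [e1]
    rw [Finset.sum_sub_distrib]
    have A : (∑ y : Fin k → X, ∏ i, p t (y i)) = ∏ _i : Fin k, ∑ x, p t x :=
      sum_prod_fn fun _ x => p t x
    have B : (∑ y : Fin k → X, ∏ i, (p t (y i) * (1 - (f (y i) : ℝ))))
        = ∏ _i : Fin k, ∑ x, (p t x * (1 - (f x : ℝ))) :=
      sum_prod_fn fun _ x => p t x * (1 - (f x : ℝ))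
    rw [A, B]
    simp [hsum t, hsum1 t, Finset.prod_const]
  have hRHS : deriv (fun t => ∑ y : Fin k → X,
      (∏ i, p t (y i)) * (1 - ∏ i, (1 - (f (y i) : ℝ)))) θ
      = (k : ℝ) * (1 - Q) ^ (k - 1) * Q' := by
    have hfun : (fun t => ∑ y : Fin k → X,
        (∏ i, p t (y i)) * (1 - ∏ i, (1 - (f (y i) : ℝ))))
        = fun t => 1 - (1 - ∑ x, p t x * (f x : ℝ)) ^ k := funext hpass
    rw [hfun]
    have hd : HasDerivAt (fun t => 1 - (1 - ∑ x, p t x * (f x : ℝ)) ^ k)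
        (0 - ((k : ℝ) * (1 - ∑ x, p θ x * (f x : ℝ)) ^ (k - 1) * (0 - Q'))) θ :=
      (hasDerivAt_const θ (1 : ℝ)).sub (((hasDerivAt_const θ (1 : ℝ)).sub (hQ θ)).pow k)
    rw [hd.deriv, ← hQdef]
    ring
  rw [hRHS]
  -- value lemmas for the three product forms
  have hval1 : ∀ i : Fin n, (∑ z : Fin n → X,
      ∏ j, (if j = i then deriv (fun t => p t (z j)) θ * (f (z j) : ℝ) else p θ (z j))) = Q' := by
    intro i
    refine (sum_prod_fn fun j x =>
      if j = i then deriv (fun t => p t x) θ * (f x : ℝ) else p θ x).trans ?_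
    have h : ∀ j : Fin n, (∑ x, if j = i then deriv (fun t => p t x) θ * (f x : ℝ) else p θ x)
        = if j = i then Q' else 1 := by
      intro j
      by_cases h : j = i <;> simp [h, hsum θ, hQ'def]
    rw [Finset.prod_congr rfl fun j _ => h j]
    simp
  have hval2 : ∀ i : Fin n, (∑ z : Fin n → X,
      ∏ j, (if j = i then deriv (fun t => p t (z j)) θ * (1 - (f (z j) : ℝ)) else p θ (z j)))
      = -Q' := by
    intro i
    refine (sum_prod_fn fun j x =>
      if j = i then deriv (fun t => p t x) θ * (1 - (f x : ℝ)) else p θ x).trans ?_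
    have h : ∀ j : Fin n,
        (∑ x, if j = i then deriv (fun t => p t x) θ * (1 - (f x : ℝ)) else p θ x)
        = if j = i then -Q' else 1 := by
      intro j
      by_cases h : j = i <;> simp [h, hsum θ, hD1]
    rw [Finset.prod_congr rfl fun j _ => h j]
    simp
  have hval3 : ∀ i : Fin n, ∀ S ∈ Finset.powersetCard (k - 1) (Finset.univ.erase i),
      (∑ z : Fin n → X, ∏ j, (if j = i then deriv (fun t => p t (z j)) θ * (1 - (f (z j) : ℝ))
          else if j ∈ S then p θ (z j) * (1 - (f (z j) : ℝ)) else p θ (z j)))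
        = -Q' * (1 - Q) ^ (k - 1) := by
    intro i S hS
    rw [Finset.mem_powersetCard] at hS
    obtain ⟨hSsub, hScard⟩ := hS
    refine (sum_prod_fn fun j x =>
      if j = i then deriv (fun t => p t x) θ * (1 - (f x : ℝ))
        else if j ∈ S then p θ x * (1 - (f x : ℝ)) else p θ x).trans ?_
    have hinner : ∀ j : Fin n, (∑ x, if j = i then deriv (fun t => p t x) θ * (1 - (f x : ℝ))
        else if j ∈ S then p θ x * (1 - (f x : ℝ)) else p θ x)
        = if j = i then -Q' else if j ∈ S then 1 - Q else 1 := by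
      intro j
      by_cases h : j = i
      · simp [h, hD1]
      · by_cases h2 : j ∈ S <;> simp [h, h2, hsum θ, hsum1 θ, hQdef]
    rw [Finset.prod_congr rfl fun j _ => hinner j]
    rw [← Finset.mul_prod_erase Finset.univ _ (Finset.mem_univ i), if_pos rfl]
    have h3 : (∏ j ∈ Finset.univ.erase i, (if j = i then -Q' else if j ∈ S then 1 - Q else 1))
        = (1 - Q) ^ (k - 1) := by
      rw [Finset.prod_congr rfl (fun j hj => if_neg (Finset.mem_erase.mp hj).1),
        Finset.prod_ite_mem, Finset.inter_eq_right.mpr hSsub, Finset.prod_const, hScard]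
    rw [h3]
  -- counting identity
  have hcount : ∀ (i : Fin n) (x : Fin n → X),
      (1 - (f (x i) : ℝ)) * ∑ S ∈ Finset.powersetCard (k - 1) (Finset.univ.erase i),
          ∏ t ∈ S, (1 - (f (x t) : ℝ))
      = (1 - (f (x i) : ℝ)) *
        ((((n - 1) - (Finset.univ.filter fun j => f (x j) = 1).card).choose (k - 1) : ℕ) : ℝ) := by
    intro i x
    rcases hf (x i) with h | h
    swap
    · simp [h]
    have hcardeq : (((Finset.univ.erase i).filter fun t => f (x t) = 0)).card
        = (n - 1) - (Finset.univ.filter fun j => f (x j) = 1).card := by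
      have e1 : ((Finset.univ.erase i).filter fun t => f (x t) = 0)
          = ((Finset.univ.filter fun t => f (x t) = 0)).erase i :=
        Finset.filter_erase _ i Finset.univ
      have hmem : i ∈ Finset.univ.filter fun t => f (x t) = 0 := by simp [h]
      have e2 : (Finset.univ.filter fun t => f (x t) = 0)
          = Finset.univ.filter (fun t => ¬ (f (x t) = 1)) :=
        Finset.filter_congr fun t _ => by rcases hf (x t) with h' | h' <;> simp [h']
      have e3 := Finset.card_filter_add_card_filter_not
        (s := (Finset.univ : Finset (Fin n))) (fun t => f (x t) = 1)
      have hcard : (Finset.univ : Finset (Fin n)).card = n := by simp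
      rw [e1, Finset.card_erase_of_mem hmem, e2]
      omega
    rw [sum_powersetCard f hf, hcardeq]
  -- pointwise identity
  have hpoint : ∀ x : Fin n → X,
      (∏ i, p θ (x i)) * ∑ i, (if f (x i) = 1 then (k : ℝ) / (n : ℝ)
          else (k : ℝ) / (n : ℝ) *
            rho (n - 1) ((Finset.univ.filter fun j => f (x j) = 1).card) (k - 1)) *
          (deriv (fun t => p t (x i)) θ / p θ (x i))
      = ∑ i, ((k : ℝ) / (n : ℝ)) *
          ((∏ j, (if j = i then deriv (fun t => p t (x j)) θ * (f (x j) : ℝ) else p θ (x j)))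
           + (∏ j, (if j = i then deriv (fun t => p t (x j)) θ * (1 - (f (x j) : ℝ))
                else p θ (x j)))
           - (1 / (((n - 1).choose (k - 1) : ℕ) : ℝ)) *
              ∑ S ∈ Finset.powersetCard (k - 1) (Finset.univ.erase i),
              ∏ j, (if j = i then deriv (fun t => p t (x j)) θ * (1 - (f (x j) : ℝ))
                else if j ∈ S then p θ (x j) * (1 - (f (x j) : ℝ)) else p θ (x j))) := by
    intro x
    rw [Finset.mul_sum]
    refine Finset.sum_congr rfl fun i _ => ?_
    have hpi : p θ (x i) ≠ 0 := ne_of_gt (hpos θ (x i))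
    have hp1 : (∏ j, p θ (x j)) = p θ (x i) * ∏ j ∈ Finset.univ.erase i, p θ (x j) :=
      (Finset.mul_prod_erase Finset.univ _ (Finset.mem_univ i)).symm
    have hw1 : (∏ j, (if j = i then deriv (fun t => p t (x j)) θ * (f (x j) : ℝ) else p θ (x j)))
        = deriv (fun t => p t (x i)) θ * (f (x i) : ℝ) *
          ∏ j ∈ Finset.univ.erase i, p θ (x j) := by
      rw [← Finset.mul_prod_erase Finset.univ _ (Finset.mem_univ i), if_pos rfl]
      congr 1
      exact Finset.prod_congr rfl fun j hj => if_neg (Finset.mem_erase.mp hj).1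
    have hw2 : (∏ j, (if j = i then deriv (fun t => p t (x j)) θ * (1 - (f (x j) : ℝ))
          else p θ (x j)))
        = deriv (fun t => p t (x i)) θ * (1 - (f (x i) : ℝ)) *
          ∏ j ∈ Finset.univ.erase i, p θ (x j) := by
      rw [← Finset.mul_prod_erase Finset.univ _ (Finset.mem_univ i), if_pos rfl]
      congr 1
      exact Finset.prod_congr rfl fun j hj => if_neg (Finset.mem_erase.mp hj).1
    have hw3 : ∀ S ∈ Finset.powersetCard (k - 1) (Finset.univ.erase i),
        (∏ j, (if j = i then deriv (fun t => p t (x j)) θ * (1 - (f (x j) : ℝ))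
            else if j ∈ S then p θ (x j) * (1 - (f (x j) : ℝ)) else p θ (x j)))
        = deriv (fun t => p t (x i)) θ * (1 - (f (x i) : ℝ)) *
          ((∏ t ∈ S, (1 - (f (x t) : ℝ))) * ∏ j ∈ Finset.univ.erase i, p θ (x j)) := by
      intro S hS
      rw [Finset.mem_powersetCard] at hS
      obtain ⟨hSsub, hScard⟩ := hS
      rw [← Finset.mul_prod_erase Finset.univ _ (Finset.mem_univ i), if_pos rfl]
      have e1 : ∀ j ∈ Finset.univ.erase i,
          (if j = i then deriv (fun t => p t (x j)) θ * (1 - (f (x j) : ℝ))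
            else if j ∈ S then p θ (x j) * (1 - (f (x j) : ℝ)) else p θ (x j))
          = p θ (x j) * (if j ∈ S then (1 - (f (x j) : ℝ)) else 1) := by
        intro j hj
        rw [if_neg (Finset.mem_erase.mp hj).1]
        by_cases h2 : j ∈ S <;> simp [h2]
      rw [Finset.prod_congr rfl e1, Finset.prod_mul_distrib,
        Finset.prod_ite_mem, Finset.inter_eq_right.mpr hSsub]
      ring
    have hsum3 : (∑ S ∈ Finset.powersetCard (k - 1) (Finset.univ.erase i),
        ∏ j, (if j = i then deriv (fun t => p t (x j)) θ * (1 - (f (x j) : ℝ))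
            else if j ∈ S then p θ (x j) * (1 - (f (x j) : ℝ)) else p θ (x j)))
        = deriv (fun t => p t (x i)) θ *
          ((1 - (f (x i) : ℝ)) *
            ((((n - 1) - (Finset.univ.filter fun j => f (x j) = 1).card).choose (k - 1) : ℕ) : ℝ))
          * ∏ j ∈ Finset.univ.erase i, p θ (x j) := by
      rw [Finset.sum_congr rfl hw3, ← Finset.mul_sum, ← Finset.sum_mul]
      have := hcount i x
      linear_combination (deriv (fun t => p t (x i)) θ *
        ∏ j ∈ Finset.univ.erase i, p θ (x j)) * this
    rw [hp1, hw1, hw2, hsum3]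
    simp only [rho]
    rcases hf (x i) with h | h
    · rw [if_neg (by omega)]
      rw [h]
      push_cast
      field_simp
      try ring
    · rw [if_pos h, h]
      push_cast
      field_simp
      try ring
  rw [Finset.sum_congr rfl fun x _ => hpoint x]
  rw [Finset.sum_comm]
  have hinner : ∀ i : Fin n, (∑ x : Fin n → X, ((k : ℝ) / (n : ℝ)) *
      ((∏ j, (if j = i then deriv (fun t => p t (x j)) θ * (f (x j) : ℝ) else p θ (x j)))
       + (∏ j, (if j = i then deriv (fun t => p t (x j)) θ * (1 - (f (x j) : ℝ))
            else p θ (x j)))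
       - (1 / (((n - 1).choose (k - 1) : ℕ) : ℝ)) *
          ∑ S ∈ Finset.powersetCard (k - 1) (Finset.univ.erase i),
          ∏ j, (if j = i then deriv (fun t => p t (x j)) θ * (1 - (f (x j) : ℝ))
            else if j ∈ S then p θ (x j) * (1 - (f (x j) : ℝ)) else p θ (x j))))
      = ((k : ℝ) / (n : ℝ)) * (Q' * (1 - Q) ^ (k - 1)) := by
    intro i
    rw [← Finset.mul_sum, Finset.sum_sub_distrib, Finset.sum_add_distrib, ← Finset.mul_sum,
      hval1 i, hval2 i]
    have hswap : (∑ x : Fin n → X, ∑ S ∈ Finset.powersetCard (k - 1) (Finset.univ.erase i),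
        ∏ j, (if j = i then deriv (fun t => p t (x j)) θ * (1 - (f (x j) : ℝ))
          else if j ∈ S then p θ (x j) * (1 - (f (x j) : ℝ)) else p θ (x j)))
        = ∑ S ∈ Finset.powersetCard (k - 1) (Finset.univ.erase i),
          ∑ x : Fin n → X,
          ∏ j, (if j = i then deriv (fun t => p t (x j)) θ * (1 - (f (x j) : ℝ))
            else if j ∈ S then p θ (x j) * (1 - (f (x j) : ℝ)) else p θ (x j)) :=
      Finset.sum_comm
    rw [hswap, Finset.sum_congr rfl (hval3 i), Finset.sum_const, Finset.card_powersetCard,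
      Finset.card_erase_of_mem (Finset.mem_univ i)]
    have hcard : (Finset.univ : Finset (Fin n)).card = n := by simp
    rw [hcard, nsmul_eq_mul]
    field_simp
    try ring
  rw [Finset.sum_congr rfl fun i _ => hinner i, Finset.sum_const]
  have hcard : (Finset.univ : Finset (Fin n)).card = n := by simp
  rw [hcard, nsmul_eq_mul]
  field_simp
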